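/- Let X₁ and X₀ be groups and d, c : X₁ → X₀, e : X₀ → X₁ group homomorphisms with d ∘ e = id and c ∘ e = id, and let D = {(a,b) ∈ X₁ × X₁ : d(a) = c(b)} (a subgroup of X₁ × X₁). If m : D → X₁ is a group homomorphism satisfying m(a, e(d(a))) = a and m(e(c(b)), b) = b for all a, b ∈ X₁, then m(a,b) = b · e(c(b))⁻¹ · a for all (a,b) ∈ D. In particular there is at most one such homomorphism m. -/
import Mathlib


/-- The subgroup of composable pairs of a reflexive graph of groups:
`D = {(a,b) ∈ X₁ × X₁ : d a = c b}`. -/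
def compPairs {X₁ X₀ : Type*} [Group X₁] [Group X₀] (d c : X₁ →* X₀) :
    Subgroup (X₁ × X₁) where
  carrier := {p | d p.1 = c p.2}
  one_mem' := by simp
  mul_mem' := by
    intro a b ha hb
    simp only [Set.mem_setOf_eq, Prod.fst_mul, Prod.snd_mul, map_mul] at *
    rw [ha, hb]
  inv_mem' := by
    intro a ha
    simp only [Set.mem_setOf_eq, Prod.fst_inv, Prod.snd_inv, map_inv] at *
    rw [ha]

theorem mem_compPairs {X₁ X₀ : Type*} [Group X₁] [Group X₀] (d c : X₁ →* X₀)
    (p : X₁ × X₁) : p ∈ compPairs d c ↔ d p.1 = c p.2 := Iff.rfl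

lemma comp_formula {X₁ X₀ : Type*} [Group X₁] [Group X₀]
    (d c : X₁ →* X₀) (e : X₀ →* X₁)
    (hde : ∀ x, d (e x) = x) (hce : ∀ x, c (e x) = x)
    (m : compPairs d c →* X₁)
    (hml : ∀ a : X₁, m ⟨(a, e (d a)), (mem_compPairs d c _).mpr (hce (d a)).symm⟩ = a)
    (hmr : ∀ b : X₁, m ⟨(e (c b), b), (mem_compPairs d c _).mpr (hde (c b))⟩ = b) :
    ∀ p : compPairs d c,
      m p = (p : X₁ × X₁).2 * (e (c (p : X₁ × X₁).2))⁻¹ * (p : X₁ × X₁).1 := by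
  rintro ⟨⟨a, b⟩, hp⟩
  have hp' : d a = c b := hp
  set x := (e (c b))⁻¹ * a with hx
  have hdx : d x = 1 := by simp [hx, hde, hp']
  have hx1 : e (d x) = 1 := by rw [hdx, map_one]
  have key : (⟨(a, b), hp⟩ : compPairs d c)
      = ⟨(e (c b), b), (mem_compPairs d c _).mpr (hde (c b))⟩
        * ⟨(x, e (d x)), (mem_compPairs d c _).mpr (hce (d x)).symm⟩ := by
    ext
    · simp [hx]
    · simp only [Subgroup.coe_mul, Prod.snd_mul, hx1, mul_one]
  conv_lhs => rw [key, map_mul, hmr, hml]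
  rw [hx]
  group

/-- any internal-category composition `m` on a reflexive graph of groups
is given by `m (a, b) = b * (e (c b))⁻¹ * a`; in particular it is unique. -/
theorem composition_unique {X₁ X₀ : Type*} [Group X₁] [Group X₀]
    (d c : X₁ →* X₀) (e : X₀ →* X₁)
    (hde : ∀ x, d (e x) = x) (hce : ∀ x, c (e x) = x)
    (m : compPairs d c →* X₁)
    (hml : ∀ a : X₁, m ⟨(a, e (d a)), (mem_compPairs d c _).mpr (hce (d a)).symm⟩ = a)
    (hmr : ∀ b : X₁, m ⟨(e (c b), b), (mem_compPairs d c _).mpr (hde (c b))⟩ = b) :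
    (∀ p : compPairs d c,
        m p = (p : X₁ × X₁).2 * (e (c (p : X₁ × X₁).2))⁻¹ * (p : X₁ × X₁).1) ∧
    (∀ m' : compPairs d c →* X₁,
        (∀ a : X₁, m' ⟨(a, e (d a)), (mem_compPairs d c _).mpr (hce (d a)).symm⟩ = a) →
        (∀ b : X₁, m' ⟨(e (c b), b), (mem_compPairs d c _).mpr (hde (c b))⟩ = b) →
        m' = m) := by
  refine ⟨comp_formula d c e hde hce m hml hmr, ?_⟩
  intro m' hml' hmr'
  ext p
  rw [comp_formula d c e hde hce m hml hmr p,
    comp_formula d c e hde hce m' hml' hmr' p]
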